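/- Every CPC-block gluing tree-shift is topologically mixing: if T is CPC BG, then T is TM. -/

import Mathlib

namespace TreeShiftPaper

/-- Words over the alphabet `Σ = {0, …, k-1}`: nodes of the `k`-tree. -/
abbrev Word (k : ℕ) := List (Fin k)

variable {k : ℕ} {A : Type*}

/-- A set of words is prefix-closed if it contains every prefix of each of its elements. -/
def PrefixClosed (S : Set (Word k)) : Prop :=
  ∀ w ∈ S, ∀ v : Word k, v <+: w → v ∈ S

/-- The pattern with support `S` and labels `u` appears in the labeled tree `t`. -/
def PatternAppears (t : Word k → A) (S : Set (Word k)) (u : Word k → A) : Prop :=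
  ∃ s : Word k, ∀ w ∈ S, t (s ++ w) = u w

/-- The set of labeled trees avoiding every pattern of the forbidden family `F`. -/
def treeShiftOf (F : Set ((Set (Word k)) × (Word k → A))) : Set (Word k → A) :=
  {t | ∀ p ∈ F, ¬ PatternAppears t p.1 p.2}

/-- `T` is a tree-shift: it is defined by some forbidden set of patterns
(each with finite prefix-closed support). -/
def IsTreeShift (T : Set (Word k → A)) : Prop :=
  ∃ F : Set ((Set (Word k)) × (Word k → A)),
    (∀ p ∈ F, p.1.Finite ∧ PrefixClosed p.1) ∧ T = treeShiftOf F

/-- `T` is a tree-shift of finite type: the forbidden set can be chosen finite. -/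
def IsTreeSFT (T : Set (Word k → A)) : Prop :=
  ∃ F : Set ((Set (Word k)) × (Word k → A)),
    F.Finite ∧ (∀ p ∈ F, p.1.Finite ∧ PrefixClosed p.1) ∧ T = treeShiftOf F

/-- The finite word `w` occurs in the one-sided sequence `x` at position `i`. -/
def OccursAt (x : ℕ → A) (i : ℕ) (w : List A) : Prop :=
  ∀ j : Fin w.length, x (i + (j : ℕ)) = w.get j

/-- The one-sided shift space defined by the forbidden set of words `F`. -/
def shiftOf (F : Set (List A)) : Set (ℕ → A) :=
  {x | ∀ w ∈ F, ∀ i : ℕ, ¬ OccursAt x i w}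

/-- `X` is a one-sided shift space. -/
def IsShift (X : Set (ℕ → A)) : Prop := ∃ F : Set (List A), X = shiftOf F

/-- `X` is a one-sided shift of finite type. -/
def IsSFT (X : Set (ℕ → A)) : Prop :=
  ∃ F : Set (List A), F.Finite ∧ X = shiftOf F

/-- A chain: an infinite path in the tree starting at the root. -/
def IsChain (c : ℕ → Word k) : Prop :=
  c 0 = [] ∧ ∀ n : ℕ, ∃ i : Fin k, c (n + 1) = c n ++ [i]

/-- The hom tree-shift associated with a one-sided shift space `X`: labeled trees whose
projection along every chain lies in `X`. -/
def homTree (k : ℕ) (X : Set (ℕ → A)) : Set (Word k → A) :=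
  {t | ∀ c : ℕ → Word k, IsChain c → (fun n => t (c n)) ∈ X}

/-- `Y` is a sofic one-sided shift: image of an SFT under a sliding block code induced
by an `n`-block map. -/
def IsSofic (Y : Set (ℕ → A)) : Prop :=
  ∃ (B : Type) (_ : Fintype B) (X : Set (ℕ → B)) (n : ℕ) (f : (ℕ → B) → A),
    IsSFT X ∧ (∀ u v : ℕ → B, (∀ j < n, u j = v j) → f u = f v) ∧
    (fun x : ℕ → B => fun i => f (fun j => x (i + j))) '' X = Y

/-- `T` is a sofic tree-shift: image of a tree-SFT under the map induced by an
`n`-block map. -/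
def IsSoficTree (T : Set (Word k → A)) : Prop :=
  ∃ (B : Type) (_ : Fintype B) (T' : Set (Word k → B)) (n : ℕ) (g : (Word k → B) → A),
    IsTreeSFT T' ∧
    (∀ u v : Word k → B, (∀ w : Word k, w.length ≤ n → u w = v w) → g u = g v) ∧
    (fun t : Word k → B => fun w => g (fun z => t (w ++ z))) '' T' = T

/-- The Markov tree-shift determined by `k` binary `d × d` transition matrices. -/
def markovTree (k d : ℕ) (M : Fin k → Matrix (Fin d) (Fin d) Bool) :
    Set (Word k → Fin d) :=
  {t | ∀ w : Word k, ∀ i : Fin k, M i (t w) (t (w ++ [i])) = true}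

/-- The one-sided Markov (vertex) shift determined by a binary `d × d` matrix. -/
def markovShift (d : ℕ) (M : Matrix (Fin d) (Fin d) Bool) : Set (ℕ → Fin d) :=
  {x | ∀ i : ℕ, M (x i) (x (i + 1)) = true}

/-- The pattern with support `S` and labels `u` is admissible in `T`. -/
def AdmissiblePattern (T : Set (Word k → A)) (S : Set (Word k)) (u : Word k → A) : Prop :=
  ∃ t ∈ T, ∃ s : Word k, ∀ w ∈ S, t (s ++ w) = u w

/-- The `n`-block `u` (a labeling of `Δ_n`) is admissible in `T`. -/
def AdmissibleBlock (T : Set (Word k → A)) (n : ℕ) (u : Word k → A) : Prop :=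
  ∃ t ∈ T, ∃ s : Word k, ∀ w : Word k, w.length ≤ n → t (s ++ w) = u w

/-- Word distance on the `k`-tree:
`d(x,y) = |x| + |y| - 2 · max{|w| : w` a common prefix of `x` and `y}`. -/
noncomputable def wordDist (x y : Word k) : ℕ :=
  x.length + y.length - 2 * sSup {m : ℕ | ∃ w : Word k, w <+: x ∧ w <+: y ∧ w.length = m}

/-- The boundary `∂S = {w ∈ S : wΣ ∩ S = ∅}` of a support `S`. -/
def boundary (S : Set (Word k)) : Set (Word k) :=
  {w | w ∈ S ∧ ∀ i : Fin k, w ++ [i] ∉ S}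

/-- A complete prefix code: a finite prefix set such that every word of length at least
`max_{z ∈ P} |z|` has a prefix in `P`. -/
def IsCPC (P : Set (Word k)) : Prop :=
  P.Finite ∧ (∀ x ∈ P, ∀ y ∈ P, x <+: y → x = y) ∧
  ∀ w : Word k, (∀ z ∈ P, z.length ≤ w.length) → ∃ x ∈ P, x <+: w

/-- Strong irreducibility with gap `N`. -/
def SIGap (T : Set (Word k → A)) (N : ℕ) : Prop :=
  ∀ (Su Sv : Set (Word k)) (u v : Word k → A),
    Su.Finite → PrefixClosed Su → Sv.Finite → PrefixClosed Sv →
    AdmissiblePattern T Su u → AdmissiblePattern T Sv v →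
    ∀ w : Word k, (∀ h ∈ Su, N ≤ wordDist w h) →
      ∃ t ∈ T, (∀ z ∈ Su, t z = u z) ∧ ∀ z ∈ Sv, t (w ++ z) = v z

/-- `T` is strongly irreducible (SI). -/
def SI (T : Set (Word k → A)) : Prop := ∃ N : ℕ, SIGap T N

/-- `T` is block gluing (BG). -/
def BG (T : Set (Word k → A)) : Prop :=
  ∃ N : ℕ, ∀ (n m : ℕ) (u v : Word k → A),
    AdmissibleBlock T n u → AdmissibleBlock T m v →
    ∀ w : Word k, N + n ≤ w.length →
      ∃ t ∈ T, (∀ z : Word k, z.length ≤ n → t z = u z) ∧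
        ∀ z : Word k, z.length ≤ m → t (w ++ z) = v z

/-- `T` is topologically mixing (TM). -/
def TM (T : Set (Word k → A)) : Prop :=
  ∀ H₁ H₂ : Set (Word k), H₁.Finite → H₂.Finite →
    ∃ N : ℕ, ∀ t₁ ∈ T, ∀ t₂ ∈ T, ∀ w : Word k, (∀ h ∈ H₁, N ≤ wordDist w h) →
      ∃ t ∈ T, (∀ z ∈ H₁, t z = t₁ z) ∧ ∀ z ∈ H₂, t (w ++ z) = t₂ z

/-- `T` is irreducible (IR). -/
def IR (T : Set (Word k → A)) : Prop :=
  ∀ (n m : ℕ) (u v : Word k → A),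
    AdmissibleBlock T n u → AdmissibleBlock T m v →
    ∃ w : Word k, n < w.length ∧
      ∃ t ∈ T, (∀ z : Word k, z.length ≤ n → t z = u z) ∧
        ∀ z : Word k, z.length ≤ m → t (w ++ z) = v z

/-- `T` is CPC-strongly irreducible via the prefix set `P`. -/
def CPCSIWith (T : Set (Word k → A)) (P : Set (Word k)) : Prop :=
  ∀ (Su Sv : Set (Word k)) (u v : Word k → A),
    Su.Finite → PrefixClosed Su → Sv.Finite → PrefixClosed Sv →
    AdmissiblePattern T Su u → AdmissiblePattern T Sv v →
    ∃ t ∈ T, (∀ z ∈ Su, t z = u z) ∧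
      ∀ w ∈ boundary Su, ∀ z ∈ P, ∀ y ∈ Sv, t (w ++ z ++ y) = v y

/-- `T` is CPC-strongly irreducible (CPC SI). -/
def CPCSI (T : Set (Word k → A)) : Prop := ∃ P : Set (Word k), IsCPC P ∧ CPCSIWith T P

/-- `T` is uniform CPC-strongly irreducible (CPC USI): CPC SI with `P = Σ^N`. -/
def CPCUSI (T : Set (Word k → A)) : Prop :=
  ∃ N : ℕ, CPCSIWith T {z : Word k | z.length = N}

/-- `T` is CPC-block gluing via the prefix set `P`. -/
def CPCBGWith (T : Set (Word k → A)) (P : Set (Word k)) : Prop :=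
  ∀ (n m : ℕ) (u v : Word k → A),
    AdmissibleBlock T n u → AdmissibleBlock T m v →
    ∃ t ∈ T, (∀ z : Word k, z.length ≤ n → t z = u z) ∧
      ∀ w : Word k, w.length = n → ∀ z ∈ P, ∀ y : Word k, y.length ≤ m →
        t (w ++ z ++ y) = v y

/-- `T` is CPC-block gluing (CPC BG). -/
def CPCBG (T : Set (Word k → A)) : Prop := ∃ P : Set (Word k), IsCPC P ∧ CPCBGWith T P

/-- `T` is uniform CPC-block gluing (CPC UBG): CPC BG with `P = Σ^N`. -/
def CPCUBG (T : Set (Word k → A)) : Prop :=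
  ∃ N : ℕ, CPCBGWith T {z : Word k | z.length = N}

/-- `T` is CPC-irreducible (CPC IR). -/
def CPCIR (T : Set (Word k → A)) : Prop :=
  ∀ (n m : ℕ) (u v : Word k → A),
    AdmissibleBlock T n u → AdmissibleBlock T m v →
    ∃ P : Set (Word k), IsCPC P ∧ (∀ z ∈ P, n + 1 ≤ z.length) ∧
      ∃ t ∈ T, (∀ z : Word k, z.length ≤ n → t z = u z) ∧
        ∀ w ∈ P, ∀ y : Word k, y.length ≤ m → t (w ++ y) = v y

/-- The finite word `u` is admissible in the one-sided shift space `X`. -/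
def WordAdmissible (X : Set (ℕ → A)) (u : List A) : Prop :=
  ∃ x ∈ X, ∃ i : ℕ, OccursAt x i u

/-- The one-sided shift space `X` is topologically mixing. -/
def MixingShift (X : Set (ℕ → A)) : Prop :=
  ∀ u v : List A, WordAdmissible X u → WordAdmissible X v →
    ∃ N : ℕ, ∀ n ≥ N, ∃ x ∈ X, OccursAt x 0 u ∧ OccursAt x (u.length + n) v

/-- The one-sided shift space `X` is transitive (irreducible). -/
def TransitiveShift (X : Set (ℕ → A)) : Prop :=
  ∀ u v : List A, WordAdmissible X u → WordAdmissible X v →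
    ∃ x ∈ X, ∃ n : ℕ, u.length ≤ n ∧ OccursAt x 0 u ∧ OccursAt x n v

end TreeShiftPaper

namespace TreeShiftPaper

/-- Tree-shifts are invariant under the shift action. -/
lemma shift_mem_aux {k : ℕ} {A : Type*} {T : Set (Word k → A)} (hT : IsTreeShift T)
    {t : Word k → A} (ht : t ∈ T) (q : Word k) : (fun y => t (q ++ y)) ∈ T := by
  obtain ⟨F, -, rfl⟩ := hT
  intro p hp hpa
  obtain ⟨s, hs⟩ := hpa
  refine ht p hp ⟨q ++ s, fun w hw => ?_⟩
  rw [List.append_assoc]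
  exact hs w hw

lemma replicate_cons_aux {k : ℕ} (j : ℕ) (c : Fin k) (l : List (Fin k)) :
    List.replicate j c ++ (c :: l) = (c :: List.replicate j c) ++ l := by
  induction j with
  | zero => simp
  | succ j ih => simp only [List.replicate_succ, List.cons_append, ih]

/-- Planting lemma: any block of a tree in `T` can be relocated below any word `r`. -/
lemma plant_aux {k : ℕ} {A : Type*} {T : Set (Word k → A)} (hT : IsTreeShift T)
    {P : Set (Word k)} {L : ℕ} (hL : ∀ z ∈ P, z.length ≤ L)
    (hcomp : ∀ w : Word k, (∀ z ∈ P, z.length ≤ w.length) → ∃ x ∈ P, x <+: w)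
    (hBG : CPCBGWith T P) (m : ℕ) (t₂ : Word k → A) (ht₂ : t₂ ∈ T) :
    ∀ r : Word k, ∃ t₃ ∈ T, ∀ y : Word k, y.length ≤ m → t₃ (r ++ y) = t₂ y := by
  intro r
  induction r with
  | nil => exact ⟨t₂, ht₂, fun y _ => rfl⟩
  | cons c s ih =>
    obtain ⟨t₃', ht₃', hmatch⟩ := ih
    obtain ⟨z, hzP, hzpre⟩ := hcomp (List.replicate L c) (fun z hz => by
      simpa using hL z hz)
    have hzrep : z = List.replicate z.length c := by
      obtain ⟨u, hu⟩ := hzpre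
      have h1 : (z ++ u).take z.length = z := List.take_left
      rw [hu, List.take_replicate] at h1
      have h2 : min z.length L = z.length := by
        have := hL z hzP
        omega
      rw [h2] at h1
      exact h1.symm
    obtain ⟨t, htT, -, hright⟩ := hBG 1 (s.length + m) t₂ t₃'
      ⟨t₂, ht₂, [], fun w _ => by rw [List.nil_append]⟩
      ⟨t₃', ht₃', [], fun w _ => by rw [List.nil_append]⟩
    refine ⟨fun y => t (List.replicate z.length c ++ y),
      shift_mem_aux hT htT (List.replicate z.length c), fun y hy => ?_⟩
    have hkey := hright [c] (by simp) z hzP (s ++ y) (by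
      rw [List.length_append]; omega)
    have hpos : List.replicate z.length c ++ ((c :: s) ++ y) = [c] ++ z ++ (s ++ y) := by
      conv_rhs => rw [hzrep]
      rw [List.cons_append, replicate_cons_aux]
      simp [List.append_assoc]
    simp only []
    rw [hpos, hkey, hmatch y hy]

/-- Every CPC-block gluing tree-shift is topologically mixing. -/
theorem stmt7 {k : ℕ} (hk : 2 ≤ k) {A : Type*} [Fintype A] (T : Set (Word k → A))
    (hT : IsTreeShift T) (h : CPCBG T) : TM T := by
  obtain ⟨P, ⟨hPfin, hpref, hcomp⟩, hBG⟩ := h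
  obtain ⟨L, hLub⟩ := (hPfin.image List.length).bddAbove
  have hL : ∀ z ∈ P, z.length ≤ L := fun z hz => hLub (Set.mem_image_of_mem _ hz)
  intro H₁ H₂ hH₁ hH₂
  obtain ⟨n₀, hn₀ub⟩ := (hH₁.image List.length).bddAbove
  have hn₀ : ∀ h ∈ H₁, h.length ≤ n₀ := fun h hh => hn₀ub (Set.mem_image_of_mem _ hh)
  obtain ⟨m₀, hm₀ub⟩ := (hH₂.image List.length).bddAbove
  have hm₀ : ∀ h ∈ H₂, h.length ≤ m₀ := fun h hh => hm₀ub (Set.mem_image_of_mem _ hh)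
  refine ⟨2 * n₀ + L, fun t₁ ht₁ t₂ ht₂ w hw => ?_⟩
  rcases Set.eq_empty_or_nonempty H₁ with hemp | ⟨h₀, hh₀⟩
  · obtain ⟨t₃, ht₃, hpl⟩ := plant_aux hT hL hcomp hBG m₀ t₂ ht₂ w
    exact ⟨t₃, ht₃, fun z hz => absurd (hemp ▸ hz) (Set.notMem_empty z),
      fun y hy => hpl y (hm₀ y hy)⟩
  · have h1 : 2 * n₀ + L ≤ wordDist w h₀ := hw h₀ hh₀
    have h2 : wordDist w h₀ ≤ w.length + h₀.length := by
      unfold wordDist; exact Nat.sub_le _ _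
    have hwlen : n₀ + L ≤ w.length := by
      have := hn₀ h₀ hh₀
      omega
    have hdroplen : L ≤ (w.drop n₀).length := by
      rw [List.length_drop]; omega
    obtain ⟨z, hzP, hzpre⟩ := hcomp (w.drop n₀) (fun z hz => le_trans (hL z hz) hdroplen)
    obtain ⟨r, hr⟩ := hzpre
    obtain ⟨t₃, ht₃, hpl⟩ := plant_aux hT hL hcomp hBG m₀ t₂ ht₂ r
    obtain ⟨t, htT, hleft, hright⟩ := hBG n₀ (r.length + m₀) t₁ t₃
      ⟨t₁, ht₁, [], fun v _ => by rw [List.nil_append]⟩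
      ⟨t₃, ht₃, [], fun v _ => by rw [List.nil_append]⟩
    refine ⟨t, htT, fun z' hz' => hleft z' (hn₀ z' hz'), fun y hy => ?_⟩
    have hkey := hright (w.take n₀) (by rw [List.length_take]; omega) z hzP (r ++ y) (by
      rw [List.length_append]
      have := hm₀ y hy
      omega)
    have hpos : w ++ y = w.take n₀ ++ z ++ (r ++ y) := by
      conv_lhs => rw [← List.take_append_drop n₀ w, ← hr]
      simp [List.append_assoc]
    rw [hpos, hkey, hpl y (hm₀ y hy)]

end TreeShiftPaper
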